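/- Let H be a finite-dimensional Hilbert space, ρ a density matrix on H, and A a Hermitian matrix on H with 0 ≤ A ≤ I. Then ‖ρ − √A ρ √A‖₁ ≤ 2·√(Tr(ρ(I − A))). -/

import Mathlib

open scoped ComplexOrder

/-- The square root of a positive semidefinite matrix (as defined in the older Mathlib). -/
noncomputable def Matrix.PosSemidef.sqrt {n : Type*} [Fintype n] [DecidableEq n] {𝕜 : Type*} [RCLike 𝕜]
    {A : Matrix n n 𝕜} (hA : A.PosSemidef) : Matrix n n 𝕜 :=
  (hA.1.eigenvectorUnitary : Matrix n n 𝕜) * Matrix.diagonal ((↑) ∘ (Real.sqrt ·) ∘ hA.1.eigenvalues) *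
    (star hA.1.eigenvectorUnitary : Matrix n n 𝕜)

/-- The trace norm `Tr √(AᴴA)` of a complex square matrix. -/
noncomputable def traceNorm {n : Type*} [Fintype n] [DecidableEq n] (A : Matrix n n ℂ) : ℝ :=
  ((Matrix.posSemidef_conjTranspose_mul_self A).sqrt.trace).re

set_option linter.unusedSectionVars false

namespace Matrix.PosSemidef
open scoped MatrixOrder
variable {n : Type*} [Fintype n] [DecidableEq n] {A : Matrix n n ℂ}

lemma sqrt_eq_cfcSqrt (hA : A.PosSemidef) : hA.sqrt = CFC.sqrt A := by
  have h0 : 0 ≤ A := hA.nonneg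
  rw [CFC.sqrt_eq_real_sqrt A h0, cfcₙ_eq_cfc, Matrix.IsHermitian.cfc_eq hA.1, IsHermitian.cfc,
    Unitary.conjStarAlgAut_apply]
  rfl

lemma posSemidef_sqrt (hA : A.PosSemidef) : hA.sqrt.PosSemidef := by
  rw [sqrt_eq_cfcSqrt]
  exact Matrix.nonneg_iff_posSemidef.mp (CFC.sqrt_nonneg A)

lemma sqrt_mul_self (hA : A.PosSemidef) : hA.sqrt * hA.sqrt = A := by
  rw [sqrt_eq_cfcSqrt]
  exact CFC.sqrt_mul_sqrt_self A hA.nonneg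

lemma eq_sqrt_of_sq_eq {B : Matrix n n ℂ} (hB : B.PosSemidef) (hA : A.PosSemidef) (hBA : B ^ 2 = A) :
    B = hA.sqrt := by
  rw [sqrt_eq_cfcSqrt]
  exact (CFC.sqrt_unique (by rw [← pow_two, hBA]) hB.nonneg).symm

end Matrix.PosSemidef

namespace GentleAux

open Matrix

variable {n : Type*} [Fintype n] [DecidableEq n]

lemma trace_re_nonneg {S : Matrix n n ℂ} (hS : S.PosSemidef) : 0 ≤ S.trace.re := by
  have h : ∀ i, 0 ≤ (S i i).re := by
    intro i
    have := hS.re_dotProduct_nonneg (Pi.single i 1)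
    simpa [dotProduct, Matrix.mulVec, Pi.single_apply] using this
  rw [Matrix.trace]
  simpa [Matrix.diag, Complex.re_sum] using Finset.sum_nonneg fun i _ => h i

lemma trace_mul_re_nonneg {ρ S : Matrix n n ℂ} (hρ : ρ.PosSemidef) (hS : S.PosSemidef) :
    0 ≤ ((ρ * S).trace).re := by
  have h1 : (ρ * S).trace = (hρ.sqrt * S * hρ.sqrt).trace := by
    conv_lhs => rw [← hρ.sqrt_mul_self]
    rw [mul_assoc, Matrix.trace_mul_comm]
  rw [h1]
  refine trace_re_nonneg ?_
  have := hS.conjTranspose_mul_mul_same hρ.sqrt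
  rwa [hρ.posSemidef_sqrt.1.eq] at this

lemma trace_mono {ρ X Y : Matrix n n ℂ} (hρ : ρ.PosSemidef) (h : (Y - X).PosSemidef) :
    ((ρ * X).trace).re ≤ ((ρ * Y).trace).re := by
  have := trace_mul_re_nonneg hρ h
  rw [mul_sub, Matrix.trace_sub, Complex.sub_re] at this
  linarith

lemma frob1 (P : Matrix n n ℂ) :
    ((P * Pᴴ).trace).re = ∑ p : n × n, ‖P p.1 p.2‖ ^ 2 := by
  rw [Fintype.sum_prod_type, Matrix.trace, Complex.re_sum]
  refine Finset.sum_congr rfl fun i _ => ?_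
  rw [Matrix.diag, Matrix.mul_apply, Complex.re_sum]
  refine Finset.sum_congr rfl fun j _ => ?_
  simp [RCLike.star_def, Complex.mul_conj, Complex.normSq_eq_norm_sq, ← Complex.ofReal_pow]

lemma frob2 (Q : Matrix n n ℂ) :
    ((Qᴴ * Q).trace).re = ∑ p : n × n, ‖Q p.2 p.1‖ ^ 2 := by
  rw [Fintype.sum_prod_type, Matrix.trace, Complex.re_sum]
  refine Finset.sum_congr rfl fun i _ => ?_
  rw [Matrix.diag, Matrix.mul_apply, Complex.re_sum]
  refine Finset.sum_congr rfl fun j _ => ?_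
  rw [Matrix.conjTranspose_apply]
  simp only [RCLike.star_def, mul_comm, Complex.mul_conj, Complex.normSq_eq_norm_sq,
    ← Complex.ofReal_pow, Complex.ofReal_re]

/-- Cauchy–Schwarz for the trace. -/
lemma trace_CS (P Q : Matrix n n ℂ) :
    (((P * Q).trace).re) ≤
      Real.sqrt (((P * Pᴴ).trace).re) * Real.sqrt (((Qᴴ * Q).trace).re) := by
  have h1 : ((P * Q).trace).re ≤
      ∑ p : n × n, ‖P p.1 p.2‖ * ‖Q p.2 p.1‖ := by
    calc ((P * Q).trace).re ≤ ‖(P * Q).trace‖ := Complex.re_le_norm _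
      _ = ‖∑ p : n × n, P p.1 p.2 * Q p.2 p.1‖ := by
          rw [Matrix.trace, Fintype.sum_prod_type]
          simp [Matrix.diag, Matrix.mul_apply]
      _ ≤ ∑ p : n × n, ‖P p.1 p.2 * Q p.2 p.1‖ :=
          norm_sum_le _ _
      _ = _ := by simp [_root_.map_mul]
  refine h1.trans ?_
  have h2 := Real.sum_mul_le_sqrt_mul_sqrt Finset.univ
      (fun p : n × n => ‖P p.1 p.2‖) (fun p : n × n => ‖Q p.2 p.1‖)
  rw [frob1, frob2]
  exact h2

lemma exists_dual {M : Matrix n n ℂ} (hM : M.IsHermitian) :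
    ∃ W : Matrix n n ℂ, Wᴴ * W = 1 ∧ traceNorm M = (((W * M).trace).re) := by
  set U : Matrix n n ℂ := (hM.eigenvectorUnitary : Matrix n n ℂ) with hU
  have hU2 : Uᴴ * U = 1 := by
    have := (Matrix.mem_unitaryGroup_iff').mp hM.eigenvectorUnitary.2
    rwa [Matrix.star_eq_conjTranspose] at this
  have hU1 : U * Uᴴ = 1 := by
    have := (Matrix.mem_unitaryGroup_iff).mp hM.eigenvectorUnitary.2
    rwa [Matrix.star_eq_conjTranspose] at this
  have key : ∀ d₁ d₂ : n → ℂ, (U * diagonal d₁ * Uᴴ) * (U * diagonal d₂ * Uᴴ)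
      = U * diagonal (fun i => d₁ i * d₂ i) * Uᴴ := by
    intro d₁ d₂
    calc (U * diagonal d₁ * Uᴴ) * (U * diagonal d₂ * Uᴴ)
        = U * diagonal d₁ * (Uᴴ * U) * diagonal d₂ * Uᴴ := by
          simp only [Matrix.mul_assoc]
      _ = U * diagonal (fun i => d₁ i * d₂ i) * Uᴴ := by
          rw [hU2, Matrix.mul_one, Matrix.mul_assoc, Matrix.mul_assoc,
            ← Matrix.mul_assoc (diagonal d₁), Matrix.diagonal_mul_diagonal]
          simp [Matrix.mul_assoc]
  have keyH : ∀ d : n → ℂ, (U * diagonal d * Uᴴ)ᴴ = U * diagonal (fun i => star (d i)) * Uᴴ := by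
    intro d
    rw [Matrix.conjTranspose_mul, Matrix.conjTranspose_mul, Matrix.diagonal_conjTranspose,
      Matrix.conjTranspose_conjTranspose, Matrix.mul_assoc]
    rfl
  have keyTr : ∀ d : n → ℂ, (U * diagonal d * Uᴴ).trace = ∑ i, d i := by
    intro d
    rw [Matrix.trace_mul_comm, ← Matrix.mul_assoc, hU2, Matrix.one_mul, Matrix.trace_diagonal]
  set μ := hM.eigenvalues with hμ
  have hspec : M = U * diagonal (fun i => (μ i : ℂ)) * Uᴴ := by
    have := hM.spectral_theorem
    rwa [Unitary.conjStarAlgAut_apply, Matrix.star_eq_conjTranspose] at this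
  set s : n → ℂ := fun i => if 0 ≤ μ i then 1 else -1 with hs
  refine ⟨U * diagonal s * Uᴴ, ?_, ?_⟩
  · rw [keyH, key]
    have : (fun i => star (s i) * s i) = fun _ => (1 : ℂ) := by
      funext i
      by_cases h : 0 ≤ μ i <;> simp [hs, h]
    rw [this, Matrix.diagonal_one, Matrix.mul_one, hU1]
  · have habs : M ᴴ * M = U * diagonal (fun i => ((|μ i| : ℝ) : ℂ) * ((|μ i| : ℝ) : ℂ)) * Uᴴ := by
      rw [hM.eq]
      conv_lhs => rw [hspec]
      rw [key]
      have : (fun i => ((μ i : ℝ) : ℂ) * ((μ i : ℝ) : ℂ))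
          = fun i => ((|μ i| : ℝ) : ℂ) * ((|μ i| : ℝ) : ℂ) := by
        funext i
        rw [← Complex.ofReal_mul, ← Complex.ofReal_mul, abs_mul_abs_self]
      rw [this]
    have hPsd : (U * diagonal (fun i => ((|μ i| : ℝ) : ℂ)) * Uᴴ).PosSemidef := by
      refine Matrix.PosSemidef.mul_mul_conjTranspose_same ?_ U
      refine Matrix.posSemidef_diagonal_iff.mpr fun i => ?_
      rw [Complex.zero_le_real]
      exact abs_nonneg _
    have hsq : (U * diagonal (fun i => ((|μ i| : ℝ) : ℂ)) * Uᴴ) ^ 2 = Mᴴ * M := by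
      rw [pow_two, key, habs]
    have hsqrt := hPsd.eq_sqrt_of_sq_eq (Matrix.posSemidef_conjTranspose_mul_self M) hsq
    have h1 : traceNorm M = ∑ i, |μ i| := by
      rw [traceNorm, ← hsqrt, keyTr]
      rw [← Complex.ofReal_sum]
      exact Complex.ofReal_re _
    have h2 : ((U * diagonal s * Uᴴ) * M).trace = ∑ i, s i * (μ i : ℂ) := by
      conv_lhs => rw [hspec]
      rw [key, keyTr]
    rw [h1, h2, Complex.re_sum]
    refine Finset.sum_congr rfl fun i _ => ?_
    by_cases h : 0 ≤ μ i
    · simp [hs, h, abs_of_nonneg h]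
    · push_neg at h
      simp [hs, not_le.mpr h, abs_of_neg h]

lemma eigenvalues_le_one {A : Matrix n n ℂ} (hA : A.PosSemidef) (hA1 : (1 - A).PosSemidef)
    (i : n) : hA.1.eigenvalues i ≤ 1 := by
  have h0 := hA1.re_dotProduct_nonneg ((WithLp.equiv 2 _) (hA.1.eigenvectorBasis i))
  rw [Matrix.sub_mulVec, Matrix.one_mulVec, dotProduct_sub] at h0
  have hv : (star ((WithLp.equiv 2 _) (hA.1.eigenvectorBasis i)) ⬝ᵥ
      ((WithLp.equiv 2 _) (hA.1.eigenvectorBasis i))) = (1 : ℂ) := by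
    have := (EuclideanSpace.inner_eq_star_dotProduct (𝕜 := ℂ)
      (hA.1.eigenvectorBasis i) (hA.1.eigenvectorBasis i)).symm
    rw [inner_self_eq_norm_sq_to_K, hA.1.eigenvectorBasis.orthonormal.1 i] at this
    rw [dotProduct_comm]
    simpa using this
  have heq := hA.1.eigenvalues_eq i
  rw [map_sub, hv] at h0
  simp only [RCLike.re_to_complex, Complex.one_re, WithLp.equiv_apply] at h0 heq
  linarith [heq, h0]

end GentleAux

open Matrix in
/-- The gentle measurement lemma (Winter; Ogawa–Nagaoka variant): for a density matrix `ρ`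
and a Hermitian `A` with `0 ≤ A ≤ I`, `‖ρ − √A ρ √A‖₁ ≤ 2 √(Tr ρ(I − A))`. -/
theorem stmt1 {n : Type*} [Fintype n] [DecidableEq n]
    (ρ A : Matrix n n ℂ) (hρ : ρ.PosSemidef) (hρ1 : ρ.trace = 1)
    (hA : A.PosSemidef) (hA1 : (1 - A).PosSemidef) :
    traceNorm (ρ - hA.sqrt * ρ * hA.sqrt) ≤ 2 * Real.sqrt ((ρ * (1 - A)).trace.re) := by
  open GentleAux in
  set B := hA.sqrt with hBdef
  have hBH : Bᴴ = B := hA.posSemidef_sqrt.1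
  have hBB : B * B = A := hA.sqrt_mul_self
  have hsH : (hρ.sqrt)ᴴ = hρ.sqrt := hρ.posSemidef_sqrt.1
  have hss : hρ.sqrt * hρ.sqrt = ρ := hρ.sqrt_mul_self
  have h1B : (1 - B)ᴴ = 1 - B := by
    rw [Matrix.conjTranspose_sub, Matrix.conjTranspose_one, hBH]
  -- PSD of (1-A) - (1-B)*(1-B)
  have hBA : (B - A).PosSemidef := by
    set U : Matrix n n ℂ := (hA.1.eigenvectorUnitary : Matrix n n ℂ) with hU
    set μ := hA.1.eigenvalues with hμ
    have hspec : A = U * diagonal (fun i => (μ i : ℂ)) * Uᴴ := by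
      have := hA.1.spectral_theorem
      rwa [Unitary.conjStarAlgAut_apply, Matrix.star_eq_conjTranspose] at this
    have hBform : B = U * diagonal (fun i => ((Real.sqrt (μ i) : ℝ) : ℂ)) * Uᴴ := by
      rw [hBdef]; rfl
    have hform : B - A = U * diagonal (fun i => ((Real.sqrt (μ i) - μ i : ℝ) : ℂ)) * Uᴴ := by
      rw [hBform]
      conv_lhs => rw [hspec]
      rw [← Matrix.sub_mul, ← Matrix.mul_sub]
      have hd : (diagonal fun i => ((Real.sqrt (μ i) : ℝ) : ℂ))
          - (diagonal fun i => ((μ i : ℝ) : ℂ))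
          = diagonal fun i => ((Real.sqrt (μ i) - μ i : ℝ) : ℂ) := by
        rw [Matrix.diagonal_sub]
        funext i
        push_cast
        ring
      rw [hd]
    rw [hform]
    refine Matrix.PosSemidef.mul_mul_conjTranspose_same ?_ U
    refine Matrix.posSemidef_diagonal_iff.mpr fun i => ?_
    rw [Complex.zero_le_real]
    have h0 : 0 ≤ μ i := hA.eigenvalues_nonneg i
    have h1 : μ i ≤ 1 := eigenvalues_le_one hA hA1 i
    nlinarith [Real.mul_self_sqrt h0, Real.sqrt_nonneg (μ i), Real.sqrt_le_one.mpr h1]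
  have hkeyPSD : ((1 - A) - (1 - B) * (1 - B)).PosSemidef := by
    have hexp : (1 - A) - (1 - B) * (1 - B) = (B - A) + (B - A) := by
      rw [mul_sub, mul_one, sub_mul, one_mul, hBB]
      abel
    rw [hexp]
    exact hBA.add hBA
  have hM : (ρ - B * ρ * B).IsHermitian := by
    refine hρ.1.sub ?_
    show (B * ρ * B)ᴴ = B * ρ * B
    rw [Matrix.conjTranspose_mul, Matrix.conjTranspose_mul, hBH, hρ.1.eq, ← Matrix.mul_assoc]
  obtain ⟨W, hW1, hWtr⟩ := GentleAux.exists_dual hM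
  set t := ((ρ * (1 - A)).trace).re with ht
  have ht0 : 0 ≤ t := trace_mul_re_nonneg hρ hA1
  have hQ : ((ρ * ((1 - B) * (1 - B))).trace).re ≤ t := trace_mono hρ hkeyPSD
  -- term 1
  have e1 : (W * hρ.sqrt) * (hρ.sqrt * (1 - B)) = W * (ρ * (1 - B)) := by
    rw [Matrix.mul_assoc W, ← Matrix.mul_assoc hρ.sqrt, hss]
  have eq1a : ((W * hρ.sqrt) * (W * hρ.sqrt)ᴴ).trace = ρ.trace := by
    rw [Matrix.conjTranspose_mul, hsH, Matrix.trace_mul_comm, Matrix.mul_assoc,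
      ← Matrix.mul_assoc Wᴴ W, hW1, Matrix.one_mul, hss]
  have eq1b : ((hρ.sqrt * (1 - B))ᴴ * (hρ.sqrt * (1 - B))).trace
      = (ρ * ((1 - B) * (1 - B))).trace := by
    rw [Matrix.conjTranspose_mul, h1B, hsH, Matrix.mul_assoc,
      ← Matrix.mul_assoc hρ.sqrt hρ.sqrt, hss, Matrix.trace_mul_comm, Matrix.mul_assoc]
  have b1 : ((W * (ρ * (1 - B))).trace).re ≤ Real.sqrt t := by
    rw [← e1]
    refine (trace_CS _ _).trans ?_
    rw [eq1a, eq1b, hρ1, Complex.one_re, Real.sqrt_one, one_mul]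
    exact Real.sqrt_le_sqrt hQ
  -- term 2
  have e2 : (W * ((1 - B) * hρ.sqrt)) * (hρ.sqrt * B) = W * ((1 - B) * (ρ * B)) := by
    rw [Matrix.mul_assoc W, Matrix.mul_assoc (1 - B), ← Matrix.mul_assoc hρ.sqrt, hss]
  have eq2a : ((W * ((1 - B) * hρ.sqrt)) * (W * ((1 - B) * hρ.sqrt))ᴴ).trace
      = (ρ * ((1 - B) * (1 - B))).trace := by
    rw [Matrix.conjTranspose_mul, Matrix.conjTranspose_mul, h1B, hsH, Matrix.trace_mul_comm,
      Matrix.mul_assoc (hρ.sqrt * (1 - B)), ← Matrix.mul_assoc Wᴴ W, hW1, Matrix.one_mul,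
      Matrix.trace_mul_comm, Matrix.mul_assoc, ← Matrix.mul_assoc hρ.sqrt hρ.sqrt, hss,
      Matrix.trace_mul_comm, Matrix.mul_assoc]
  have eq2b : ((hρ.sqrt * B)ᴴ * (hρ.sqrt * B)).trace = (ρ * A).trace := by
    rw [Matrix.conjTranspose_mul, hBH, hsH, Matrix.mul_assoc,
      ← Matrix.mul_assoc hρ.sqrt hρ.sqrt, hss, Matrix.trace_mul_comm, Matrix.mul_assoc, hBB]
  have hQ2 : ((ρ * A).trace).re ≤ 1 := by
    have hρA : ρ * A = ρ * 1 - ρ * (1 - A) := by rw [← Matrix.mul_sub, sub_sub_cancel]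
    rw [hρA, Matrix.trace_sub, Complex.sub_re, Matrix.mul_one, hρ1, Complex.one_re]
    linarith [ht0]
  have b2 : ((W * ((1 - B) * (ρ * B))).trace).re ≤ Real.sqrt t := by
    rw [← e2]
    refine (trace_CS _ _).trans ?_
    rw [eq2a, eq2b]
    have h₁ : Real.sqrt (((ρ * ((1 - B) * (1 - B))).trace).re) ≤ Real.sqrt t :=
      Real.sqrt_le_sqrt hQ
    have h₂ : Real.sqrt (((ρ * A).trace).re) ≤ 1 := by
      simpa [Real.sqrt_one] using Real.sqrt_le_sqrt hQ2
    calc Real.sqrt (((ρ * ((1 - B) * (1 - B))).trace).re) * Real.sqrt (((ρ * A).trace).re)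
        ≤ Real.sqrt t * 1 :=
          mul_le_mul h₁ h₂ (Real.sqrt_nonneg _) (Real.sqrt_nonneg _)
      _ = Real.sqrt t := mul_one _
  -- assemble
  have hdec : ρ - B * ρ * B = ρ * (1 - B) + (1 - B) * (ρ * B) := by noncomm_ring
  rw [hWtr]
  have hsplit : W * (ρ - B * ρ * B) = W * (ρ * (1 - B)) + W * ((1 - B) * (ρ * B)) := by
    rw [hdec, mul_add]
  rw [hsplit, Matrix.trace_add, Complex.add_re]
  calc ((W * (ρ * (1 - B))).trace).re + ((W * ((1 - B) * (ρ * B))).trace).re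
      ≤ Real.sqrt t + Real.sqrt t := add_le_add b1 b2
    _ = 2 * Real.sqrt t := by ring
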